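/- Let θ_M > 0 and let ρ : [0, θ_M] → ℝ be smooth with ρ(τ) > 0 for all τ, ρ(0) = 1, ρ'(0) = 0, and ∫₀^{θ_M} ρ(τ) dτ = 2π. Then there exists a unique strictly increasing continuously differentiable bijection θ : [0,2π] → [0,θ_M] such that the curve v(t) = (v₁(t), v₂(t)) = √(ρ(θ(t)))·(cos θ(t), sin θ(t)) satisfies v₁(t)·v₂'(t) − v₂(t)·v₁'(t) = 1 for all t ∈ [0,2π]. Moreover v(0) = (1,0), v'(0) = (0,1), and there exists a continuous function q : [0,2π] → ℝ such that v₁''(t) = q(t)·v₁(t) and v₂''(t) = q(t)·v₂(t) for all t ∈ [0,2π]. -/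

import Mathlib

open Real Set

/-- The first fundamental solution produced by the Kepler transform:
`v₁(t) = √(ρ(θ(t)))·cos θ(t)`. -/
noncomputable def kepV₁ (ρ θ : ℝ → ℝ) (t : ℝ) : ℝ := Real.sqrt (ρ (θ t)) * Real.cos (θ t)

/-- The second fundamental solution produced by the Kepler transform:
`v₂(t) = √(ρ(θ(t)))·sin θ(t)`. -/
noncomputable def kepV₂ (ρ θ : ℝ → ℝ) (t : ℝ) : ℝ := Real.sqrt (ρ (θ t)) * Real.sin (θ t)

/-- `θ` is a Kepler reparametrization for the orbit `ρ` on `[0,θM]`: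
a strictly increasing `C¹` bijection `[0,2π] → [0,θM]` for which the curve
`v = √(ρ∘θ)·(cos θ, sin θ)` has Wronskian `v₁·v₂' − v₂·v₁' ≡ 1`. -/
noncomputable def KeplerProp (θM : ℝ) (ρ θ : ℝ → ℝ) : Prop :=
  StrictMonoOn θ (Icc 0 (2 * π)) ∧
  ContDiffOn ℝ 1 θ (Icc 0 (2 * π)) ∧
  BijOn θ (Icc 0 (2 * π)) (Icc 0 θM) ∧
  ∀ t ∈ Icc (0:ℝ) (2 * π),
    kepV₁ ρ θ t * derivWithin (kepV₂ ρ θ) (Icc 0 (2 * π)) t -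
      kepV₂ ρ θ t * derivWithin (kepV₁ ρ θ) (Icc 0 (2 * π)) t = 1

noncomputable def kepG (ρ φ P f g : ℝ → ℝ) (t : ℝ) : ℝ :=
  P (φ t) * (ρ (φ t))⁻¹ / (2 * Real.sqrt (ρ (φ t))) * f (φ t) +
    Real.sqrt (ρ (φ t)) * (g (φ t) * (ρ (φ t))⁻¹)

noncomputable def kepQ (ρ φ P P2 : ℝ → ℝ) (t : ℝ) : ℝ :=
  (P2 (φ t) - (P (φ t))^2 / ρ (φ t)) / (2 * (ρ (φ t))^3)
    - (P (φ t))^2 / (4 * (ρ (φ t))^4) - ((ρ (φ t))^2)⁻¹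

lemma kep_first {θM : ℝ} {ρ φ P : ℝ → ℝ}
    (hρd : ∀ x ∈ Icc 0 θM, HasDerivWithinAt ρ (P x) (Icc 0 θM) x)
    (hpos : ∀ x ∈ Icc 0 θM, 0 < ρ x)
    (hmaps : MapsTo φ (Icc 0 (2*π)) (Icc 0 θM))
    {f g : ℝ → ℝ} (hf : ∀ x, HasDerivAt f (g x) x)
    {t e : ℝ} (ht : t ∈ Icc 0 (2*π)) (hφd : HasDerivWithinAt φ e (Icc 0 (2*π)) t) :
    HasDerivWithinAt (fun s => Real.sqrt (ρ (φ s)) * f (φ s))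
      (P (φ t) * e / (2 * Real.sqrt (ρ (φ t))) * f (φ t)
        + Real.sqrt (ρ (φ t)) * (g (φ t) * e))
      (Icc 0 (2*π)) t := by
  have hA : HasDerivWithinAt (fun s => ρ (φ s)) (P (φ t) * e) (Icc 0 (2*π)) t :=
    (hρd _ (hmaps ht)).comp t hφd hmaps
  have hsq : HasDerivWithinAt (fun s => Real.sqrt (ρ (φ s)))
      (1 / (2 * Real.sqrt (ρ (φ t))) * (P (φ t) * e)) (Icc 0 (2*π)) t :=
    (Real.hasDerivAt_sqrt (ne_of_gt (hpos _ (hmaps ht)))).comp_hasDerivWithinAt t hA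
  have hfφ : HasDerivWithinAt (fun s => f (φ s)) (g (φ t) * e) (Icc 0 (2*π)) t :=
    (hf (φ t)).comp_hasDerivWithinAt t hφd
  have := hsq.fun_mul hfφ
  exact this.congr_deriv (by ring)

lemma kep_second {θM : ℝ} {ρ θ P P2 : ℝ → ℝ}
    (hρd : ∀ x ∈ Icc 0 θM, HasDerivWithinAt ρ (P x) (Icc 0 θM) x)
    (hPd : ∀ x ∈ Icc 0 θM, HasDerivWithinAt P (P2 x) (Icc 0 θM) x)
    (hpos : ∀ x ∈ Icc 0 θM, 0 < ρ x)
    (hmaps : MapsTo θ (Icc 0 (2*π)) (Icc 0 θM))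
    {f g : ℝ → ℝ} (hf : ∀ x, HasDerivAt f (g x) x) (hg : ∀ x, HasDerivAt g (-f x) x)
    {t : ℝ} (ht : t ∈ Icc 0 (2*π))
    (hθd : HasDerivWithinAt θ (ρ (θ t))⁻¹ (Icc 0 (2*π)) t) :
    HasDerivWithinAt (kepG ρ θ P f g)
      (kepQ ρ θ P P2 t * (Real.sqrt (ρ (θ t)) * f (θ t))) (Icc 0 (2*π)) t := by
  have hmem := hmaps ht
  have hapos := hpos _ hmem
  have hane : ρ (θ t) ≠ 0 := ne_of_gt hapos
  have hsane : Real.sqrt (ρ (θ t)) ≠ 0 := ne_of_gt (Real.sqrt_pos.2 hapos)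
  have hA : HasDerivWithinAt (fun s => ρ (θ s)) (P (θ t) * (ρ (θ t))⁻¹) (Icc 0 (2*π)) t :=
    (hρd _ hmem).comp t hθd hmaps
  have hInv : HasDerivWithinAt (fun s => (ρ (θ s))⁻¹)
      (-(P (θ t) * (ρ (θ t))⁻¹) / (ρ (θ t))^2) (Icc 0 (2*π)) t := hA.inv hane
  have hP : HasDerivWithinAt (fun s => P (θ s)) (P2 (θ t) * (ρ (θ t))⁻¹) (Icc 0 (2*π)) t :=
    (hPd _ hmem).comp t hθd hmaps
  have hsq : HasDerivWithinAt (fun s => Real.sqrt (ρ (θ s)))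
      (1 / (2 * Real.sqrt (ρ (θ t))) * (P (θ t) * (ρ (θ t))⁻¹)) (Icc 0 (2*π)) t :=
    (Real.hasDerivAt_sqrt hane).comp_hasDerivWithinAt t hA
  have hfθ : HasDerivWithinAt (fun s => f (θ s)) (g (θ t) * (ρ (θ t))⁻¹) (Icc 0 (2*π)) t :=
    (hf (θ t)).comp_hasDerivWithinAt t hθd
  have hgθ : HasDerivWithinAt (fun s => g (θ s)) (-f (θ t) * (ρ (θ t))⁻¹) (Icc 0 (2*π)) t :=
    (hg (θ t)).comp_hasDerivWithinAt t hθd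
  have hden : HasDerivWithinAt (fun s => 2 * Real.sqrt (ρ (θ s)))
      (2 * (1 / (2 * Real.sqrt (ρ (θ t))) * (P (θ t) * (ρ (θ t))⁻¹))) (Icc 0 (2*π)) t :=
    hsq.const_mul 2
  have hdenne : 2 * Real.sqrt (ρ (θ t)) ≠ 0 := by positivity
  have hnum : HasDerivWithinAt (fun s => P (θ s) * (ρ (θ s))⁻¹)
      (P2 (θ t) * (ρ (θ t))⁻¹ * (ρ (θ t))⁻¹
        + P (θ t) * (-(P (θ t) * (ρ (θ t))⁻¹) / (ρ (θ t))^2)) (Icc 0 (2*π)) t := hP.fun_mul hInv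
  have h1 := ((hnum.fun_div hden hdenne).fun_mul hfθ)
  have h2 := hsq.fun_mul (hgθ.fun_mul hInv)
  have hbig := h1.add h2
  have heq : HasDerivWithinAt (kepG ρ θ P f g) _ (Icc 0 (2*π)) t := hbig
  convert heq using 1
  have hsa : Real.sqrt (ρ (θ t)) ^ 2 = ρ (θ t) := Real.sq_sqrt hapos.le
  rw [kepQ]
  set sa := Real.sqrt (ρ (θ t)) with hsadef
  rw [← hsa]
  field_simp
  ring

/-- the Kepler transform. Given a smooth positive orbit `ρ` on
`[0,θM]` with `ρ(0) = 1`, `ρ'(0) = 0` and `∫₀^{θM} ρ = 2π`, there is a unique Kepler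
reparametrization `θ`; the resulting curve satisfies `v(0) = (1,0)`, `v'(0) = (0,1)` and
is the pair of fundamental solutions of `v'' = q·v` for a continuous potential `q`. -/
theorem stmt_18 (θM : ℝ) (hθM : 0 < θM) (ρ : ℝ → ℝ)
    (hρsm : ContDiffOn ℝ (⊤ : ℕ∞) ρ (Icc 0 θM))
    (hρpos : ∀ τ ∈ Icc (0:ℝ) θM, 0 < ρ τ)
    (hρ0 : ρ 0 = 1) (hρ'0 : derivWithin ρ (Icc 0 θM) 0 = 0)
    (hρint : (∫ τ in (0:ℝ)..θM, ρ τ) = 2 * π) :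
    ∃ θ : ℝ → ℝ, KeplerProp θM ρ θ ∧
      (∀ θ' : ℝ → ℝ, KeplerProp θM ρ θ' → EqOn θ' θ (Icc 0 (2 * π))) ∧
      kepV₁ ρ θ 0 = 1 ∧ kepV₂ ρ θ 0 = 0 ∧
      derivWithin (kepV₁ ρ θ) (Icc 0 (2 * π)) 0 = 0 ∧
      derivWithin (kepV₂ ρ θ) (Icc 0 (2 * π)) 0 = 1 ∧
      ∃ q : ℝ → ℝ, ContinuousOn q (Icc 0 (2 * π)) ∧
        ∀ t ∈ Icc (0:ℝ) (2 * π),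
          derivWithin (derivWithin (kepV₁ ρ θ) (Icc 0 (2 * π))) (Icc 0 (2 * π)) t =
            q t * kepV₁ ρ θ t ∧
          derivWithin (derivWithin (kepV₂ ρ θ) (Icc 0 (2 * π))) (Icc 0 (2 * π)) t =
            q t * kepV₂ ρ θ t := by
  have hπ : (0:ℝ) < 2 * π := by have := Real.pi_pos; linarith
  have hU2 : UniqueDiffOn ℝ (Icc (0:ℝ) (2*π)) := uniqueDiffOn_Icc hπ
  have hUM : UniqueDiffOn ℝ (Icc (0:ℝ) θM) := uniqueDiffOn_Icc hθM
  -- clamp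
  set c : ℝ → ℝ := fun x => min θM (max 0 x) with hc
  have hcmem : ∀ x, c x ∈ Icc 0 θM := fun x =>
    ⟨le_min hθM.le (le_max_left 0 x), min_le_left _ _⟩
  have hceq : ∀ x ∈ Icc (0:ℝ) θM, c x = x := by
    intro x hx
    simp only [hc, max_eq_right hx.1, min_eq_right hx.2]
  set ρc : ℝ → ℝ := fun x => ρ (c x) with hρc
  have hρcont : ContinuousOn ρ (Icc 0 θM) := hρsm.continuousOn
  have hccont : Continuous c := (continuous_const.min ((continuous_const.max continuous_id)))
  have hρccont : Continuous ρc := hρcont.comp_continuous hccont hcmem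
  have hρcpos : ∀ x, 0 < ρc x := fun x => hρpos _ (hcmem x)
  -- lower bound
  obtain ⟨x₀, hx₀, hmin⟩ := isCompact_Icc.exists_isMinOn (nonempty_Icc.2 hθM.le) hρcont
  set m := ρ x₀ with hm
  have hm0 : 0 < m := hρpos _ hx₀
  have hmle : ∀ x, m ≤ ρc x := fun x => hmin (hcmem x)
  -- F
  set F : ℝ → ℝ := fun x => ∫ τ in (0:ℝ)..x, ρc τ with hF
  have hFd : ∀ x, HasDerivAt F (ρc x) x := fun x =>
    (hρccont.integral_hasStrictDerivAt 0 x).hasDerivAt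
  have hFmono : StrictMono F := strictMono_of_deriv_pos fun x => by
    rw [(hFd x).deriv]; exact hρcpos x
  have hFcont : Continuous F := by
    have : Differentiable ℝ F := fun x => (hFd x).differentiableAt
    exact this.continuous
  have hint : ∀ a b : ℝ, IntervalIntegrable ρc MeasureTheory.volume a b := fun a b =>
    hρccont.intervalIntegrable a b
  have hge : ∀ x : ℝ, 0 ≤ x → m * x ≤ F x := by
    intro x hx
    have h1 : (∫ τ in (0:ℝ)..x, m) ≤ ∫ τ in (0:ℝ)..x, ρc τ :=
      intervalIntegral.integral_mono_on hx (intervalIntegrable_const) (hint 0 x)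
        fun y _ => hmle y
    simpa [mul_comm] using h1
  have hle : ∀ x : ℝ, x ≤ 0 → F x ≤ m * x := by
    intro x hx
    have h1 : (∫ τ in x..(0:ℝ), m) ≤ ∫ τ in x..(0:ℝ), ρc τ :=
      intervalIntegral.integral_mono_on hx (intervalIntegrable_const) (hint x 0)
        fun y _ => hmle y
    have h2 : F x = -∫ τ in x..(0:ℝ), ρc τ := by
      show (∫ τ in (0:ℝ)..x, ρc τ) = -∫ τ in x..(0:ℝ), ρc τ
      rw [← intervalIntegral.integral_symm]
    rw [h2]
    simp only [intervalIntegral.integral_const, smul_eq_mul] at h1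
    nlinarith
  have hFtop : Filter.Tendsto F Filter.atTop Filter.atTop := by
    apply Filter.tendsto_atTop_mono' Filter.atTop
      ((Filter.eventually_ge_atTop (0:ℝ)).mono fun x hx => hge x hx)
    exact Filter.Tendsto.const_mul_atTop hm0 Filter.tendsto_id
  have hFbot : Filter.Tendsto F Filter.atBot Filter.atBot := by
    apply Filter.tendsto_atBot_mono' Filter.atBot
      ((Filter.eventually_le_atBot (0:ℝ)).mono fun x hx => hle x hx)
    exact Filter.Tendsto.const_mul_atBot hm0 Filter.tendsto_id
  have hFsurj : Function.Surjective F := hFcont.surjective hFtop hFbot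
  -- θ
  set E := StrictMono.orderIsoOfSurjective F hFmono hFsurj with hE
  set θ : ℝ → ℝ := fun t => E.symm t with hθ
  have hcoe : ∀ x, E x = F x := fun x => by
    rw [hE]; rw [StrictMono.coe_orderIsoOfSurjective]
  have hFθ : ∀ t, F (θ t) = t := fun t => by
    rw [← hcoe]; exact E.apply_symm_apply t
  have hθF : ∀ x, θ (F x) = x := fun x => by
    show E.symm (F x) = x
    rw [← hcoe x]; exact E.symm_apply_apply x
  have hF0 : F 0 = 0 := by
    show (∫ τ in (0:ℝ)..(0:ℝ), ρc τ) = 0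
    simp
  have hFθM : F θM = 2 * π := by
    have : (∫ τ in (0:ℝ)..θM, ρc τ) = ∫ τ in (0:ℝ)..θM, ρ τ := by
      apply intervalIntegral.integral_congr
      intro x hx
      rw [uIcc_of_le hθM.le] at hx
      exact congrArg ρ (hceq x hx)
    show (∫ τ in (0:ℝ)..θM, ρc τ) = 2 * π
    rw [this, hρint]
  have hθ0 : θ 0 = 0 := by have := hθF 0; rwa [hF0] at this
  have hθ2π : θ (2 * π) = θM := by have := hθF θM; rwa [hFθM] at this
  have hθmono : StrictMono θ := fun a b h => E.symm.strictMono h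
  have hθcont : Continuous θ := OrderIso.continuous E.symm
  have hmaps : MapsTo θ (Icc 0 (2*π)) (Icc 0 θM) := by
    intro t ht
    constructor
    · rw [← hθ0]; exact hθmono.monotone ht.1
    · rw [← hθ2π]; exact hθmono.monotone ht.2
  have hθd : ∀ t, HasDerivAt θ (ρc (θ t))⁻¹ t := fun t =>
    HasDerivAt.of_local_left_inverse hθcont.continuousAt (hFd (θ t))
      (ne_of_gt (hρcpos (θ t))) (Filter.Eventually.of_forall hFθ)
  have hρθ : ∀ t ∈ Icc (0:ℝ) (2*π), ρc (θ t) = ρ (θ t) := fun t ht => by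
    rw [hρc]; exact congrArg ρ (hceq _ (hmaps ht))
  have hθdI : ∀ t ∈ Icc (0:ℝ) (2*π), HasDerivWithinAt θ (ρ (θ t))⁻¹ (Icc 0 (2*π)) t := by
    intro t ht
    rw [← hρθ t ht]
    exact (hθd t).hasDerivWithinAt
  -- derivatives of ρ
  set P : ℝ → ℝ := derivWithin ρ (Icc 0 θM) with hP
  set P2 : ℝ → ℝ := derivWithin P (Icc 0 θM) with hP2
  have hρd : ∀ x ∈ Icc (0:ℝ) θM, HasDerivWithinAt ρ (P x) (Icc 0 θM) x := fun x hx =>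
    (hρsm.differentiableOn (by simp) x hx).hasDerivWithinAt
  have hPsm : ContDiffOn ℝ (⊤:ℕ∞) P (Icc 0 θM) := hρsm.derivWithin hUM (by exact_mod_cast le_top)
  have hPd : ∀ x ∈ Icc (0:ℝ) θM, HasDerivWithinAt P (P2 x) (Icc 0 θM) x := fun x hx =>
    (hPsm.differentiableOn (by simp) x hx).hasDerivWithinAt
  have hP2cont : ContinuousOn P2 (Icc 0 θM) :=
    (ContDiffOn.derivWithin (m := 0) hPsm hUM (by exact_mod_cast le_top)).continuousOn
  have hPcont : ContinuousOn P (Icc 0 θM) := hPsm.continuousOn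
  -- C¹ of θ
  have hθC1 : ContDiffOn ℝ 1 θ (Icc 0 (2*π)) := by
    apply ContDiff.contDiffOn
    rw [contDiff_one_iff_deriv]
    constructor
    · exact fun t => (hθd t).differentiableAt
    · have : deriv θ = fun t => (ρc (θ t))⁻¹ := funext fun t => (hθd t).deriv
      rw [this]
      exact (hρccont.comp hθcont).inv₀ fun t => ne_of_gt (hρcpos (θ t))
  -- derivWithin formulas for kepV₁, kepV₂ of θ
  have hdV₁ : ∀ t ∈ Icc (0:ℝ) (2*π),
      HasDerivWithinAt (kepV₁ ρ θ) (kepG ρ θ P Real.cos (fun x => -Real.sin x) t)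
        (Icc 0 (2*π)) t := by
    intro t ht
    exact kep_first hρd hρpos hmaps (fun x => Real.hasDerivAt_cos x) ht (hθdI t ht)
  have hdV₂ : ∀ t ∈ Icc (0:ℝ) (2*π),
      HasDerivWithinAt (kepV₂ ρ θ) (kepG ρ θ P Real.sin Real.cos t)
        (Icc 0 (2*π)) t := by
    intro t ht
    exact kep_first hρd hρpos hmaps (fun x => Real.hasDerivAt_sin x) ht (hθdI t ht)
  have hdwV₁ : ∀ t ∈ Icc (0:ℝ) (2*π),
      derivWithin (kepV₁ ρ θ) (Icc 0 (2*π)) t = kepG ρ θ P Real.cos (fun x => -Real.sin x) t :=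
    fun t ht => (hdV₁ t ht).derivWithin (hU2 t ht)
  have hdwV₂ : ∀ t ∈ Icc (0:ℝ) (2*π),
      derivWithin (kepV₂ ρ θ) (Icc 0 (2*π)) t = kepG ρ θ P Real.sin Real.cos t :=
    fun t ht => (hdV₂ t ht).derivWithin (hU2 t ht)
  -- Wronskian for θ
  have hwron : ∀ t ∈ Icc (0:ℝ) (2*π),
      kepV₁ ρ θ t * derivWithin (kepV₂ ρ θ) (Icc 0 (2*π)) t -
        kepV₂ ρ θ t * derivWithin (kepV₁ ρ θ) (Icc 0 (2*π)) t = 1 := by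
    intro t ht
    rw [hdwV₁ t ht, hdwV₂ t ht]
    have hapos := hρpos _ (hmaps ht)
    have hane : ρ (θ t) ≠ 0 := ne_of_gt hapos
    have hsane : Real.sqrt (ρ (θ t)) ≠ 0 := ne_of_gt (Real.sqrt_pos.2 hapos)
    have hsa : Real.sqrt (ρ (θ t)) ^ 2 = ρ (θ t) := Real.sq_sqrt hapos.le
    have hpyth := Real.sin_sq_add_cos_sq (θ t)
    rw [kepV₁, kepV₂, kepG, kepG]
    set sa := Real.sqrt (ρ (θ t)) with hsadef
    rw [← hsa]
    field_simp
    linear_combination (2*sa^2) * hpyth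
  have hKθ : KeplerProp θM ρ θ :=
    ⟨hθmono.strictMonoOn _, hθC1,
      ⟨hmaps, hθmono.injective.injOn, by
        intro y hy
        refine ⟨F y, ⟨?_, ?_⟩, hθF y⟩
        · rw [← hF0]; exact hFmono.monotone hy.1
        · rw [← hFθM]; exact hFmono.monotone hy.2⟩, hwron⟩
  -- uniqueness
  have huniq : ∀ φ : ℝ → ℝ, KeplerProp θM ρ φ → EqOn φ θ (Icc 0 (2*π)) := by
    intro φ hKφ
    obtain ⟨hφmono, hφC1, hφbij, hφw⟩ := hKφ
    have hφmaps : MapsTo φ (Icc 0 (2*π)) (Icc 0 θM) := hφbij.mapsTo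
    have h0mem : (0:ℝ) ∈ Icc 0 (2*π) := ⟨le_refl 0, hπ.le⟩
    have hφ0 : φ 0 = 0 := by
      have hin := hφmaps h0mem
      rcases hφbij.surjOn (⟨le_refl 0, hθM.le⟩ : (0:ℝ) ∈ Icc 0 θM) with ⟨s, hs, hφs⟩
      by_contra hne
      have h0 : 0 < φ 0 := lt_of_le_of_ne hin.1 (Ne.symm hne)
      rcases eq_or_lt_of_le hs.1 with h | h
      · rw [← h] at hφs
        exact hne hφs
      · have := hφmono h0mem hs h
        rw [hφs] at this; linarith
    -- derivative of φ and Wronskian gives φ' = (ρ∘φ)⁻¹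
    have hφd : ∀ t ∈ Icc (0:ℝ) (2*π),
        HasDerivWithinAt φ (derivWithin φ (Icc 0 (2*π)) t) (Icc 0 (2*π)) t := fun t ht =>
      (hφC1.differentiableOn one_ne_zero t ht).hasDerivWithinAt
    have hkey : ∀ t ∈ Icc (0:ℝ) (2*π),
        ρ (φ t) * derivWithin φ (Icc 0 (2*π)) t = 1 := by
      intro t ht
      have h1 := kep_first hρd hρpos hφmaps (fun x => Real.hasDerivAt_cos x) ht (hφd t ht)
      have h2 := kep_first hρd hρpos hφmaps (fun x => Real.hasDerivAt_sin x) ht (hφd t ht)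
      have e1 : derivWithin (kepV₁ ρ φ) (Icc 0 (2*π)) t = _ := h1.derivWithin (hU2 t ht)
      have e2 : derivWithin (kepV₂ ρ φ) (Icc 0 (2*π)) t = _ := h2.derivWithin (hU2 t ht)
      have hw := hφw t ht
      rw [e1, e2, kepV₁, kepV₂] at hw
      have hapos := hρpos _ (hφmaps ht)
      have hane : ρ (φ t) ≠ 0 := ne_of_gt hapos
      have hsane : Real.sqrt (ρ (φ t)) ≠ 0 := ne_of_gt (Real.sqrt_pos.2 hapos)
      have hsa : Real.sqrt (ρ (φ t)) ^ 2 = ρ (φ t) := Real.sq_sqrt hapos.le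
      have hpyth := Real.sin_sq_add_cos_sq (φ t)
      set e := derivWithin φ (Icc 0 (2*π)) t
      set sa := Real.sqrt (ρ (φ t)) with hsadef
      rw [← hsa]
      field_simp at hw
      have h2 : (2*sa)*(sa^2*e) = (2*sa)*1 := by
        linear_combination sa * hw - 2*sa^3*e*hpyth
      exact mul_left_cancel₀ (by simpa using hsane) h2
    -- F ∘ φ = id on Icc
    have hFφ : ∀ x ∈ Icc (0:ℝ) (2*π), F (φ x) = x := by
      have hder : ∀ x ∈ Ico (0:ℝ) (2*π),
          HasDerivWithinAt (fun s => F (φ s)) ((fun _ => (1:ℝ)) x) (Ici x) x := by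
        intro x hx
        have hmem : x ∈ Icc (0:ℝ) (2*π) := ⟨hx.1, hx.2.le⟩
        have hcomp : HasDerivWithinAt (fun s => F (φ s))
            (ρc (φ x) * derivWithin φ (Icc 0 (2*π)) x) (Icc 0 (2*π)) x :=
          (hFd (φ x)).comp_hasDerivWithinAt x (hφd x hmem)
        have : ρc (φ x) * derivWithin φ (Icc 0 (2*π)) x = 1 := by
          show ρ (c (φ x)) * derivWithin φ (Icc 0 (2*π)) x = 1
          rw [hceq _ (hφmaps hmem)]
          exact hkey x hmem
        rw [this] at hcomp
        exact hcomp.mono_of_mem_nhdsWithin (Icc_mem_nhdsGE_of_mem hx)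
      have hderid : ∀ x ∈ Ico (0:ℝ) (2*π),
          HasDerivWithinAt (fun s => s) ((fun _ => (1:ℝ)) x) (Ici x) x := fun x _ =>
        hasDerivWithinAt_id x (Ici x)
      have hφcont : ContinuousOn φ (Icc 0 (2*π)) := hφC1.continuousOn
      have hc1 : ContinuousOn (fun s => F (φ s)) (Icc 0 (2*π)) :=
        hFcont.comp_continuousOn hφcont
      have := eq_of_has_deriv_right_eq hder hderid hc1 continuousOn_id (by
        rw [hφ0, hF0])
      exact this
    intro x hx
    have h1 : F (φ x) = F (θ x) := by rw [hFφ x hx, hFθ x]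
    exact hFmono.injective h1
  -- initial conditions
  have h0mem : (0:ℝ) ∈ Icc 0 (2*π) := ⟨le_refl 0, hπ.le⟩
  have hθ00 : θ 0 = 0 := hθ0
  have hv10 : kepV₁ ρ θ 0 = 1 := by
    rw [kepV₁, hθ00, hρ0]; simp
  have hv20 : kepV₂ ρ θ 0 = 0 := by
    rw [kepV₂, hθ00, hρ0]; simp
  have hP00 : P 0 = 0 := hρ'0
  have hdv10 : derivWithin (kepV₁ ρ θ) (Icc 0 (2*π)) 0 = 0 := by
    rw [hdwV₁ 0 h0mem, kepG, hθ00, hρ0, hP00]; simp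
  have hdv20 : derivWithin (kepV₂ ρ θ) (Icc 0 (2*π)) 0 = 1 := by
    rw [hdwV₂ 0 h0mem, kepG, hθ00, hρ0, hP00]; simp
  -- q
  refine ⟨θ, hKθ, huniq, hv10, hv20, hdv10, hdv20, kepQ ρ θ P P2, ?_, ?_⟩
  · -- continuity of q
    have hθcontOn : ContinuousOn θ (Icc 0 (2*π)) := hθcont.continuousOn
    have hρθcont : ContinuousOn (fun t => ρ (θ t)) (Icc 0 (2*π)) :=
      hρcont.comp hθcontOn hmaps
    have hPθcont : ContinuousOn (fun t => P (θ t)) (Icc 0 (2*π)) :=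
      hPcont.comp hθcontOn hmaps
    have hP2θcont : ContinuousOn (fun t => P2 (θ t)) (Icc 0 (2*π)) :=
      hP2cont.comp hθcontOn hmaps
    have hne : ∀ t ∈ Icc (0:ℝ) (2*π), ρ (θ t) ≠ 0 := fun t ht =>
      ne_of_gt (hρpos _ (hmaps ht))
    apply ContinuousOn.sub
    apply ContinuousOn.sub
    · exact (hP2θcont.sub ((hPθcont.pow 2).div hρθcont hne)).div
        ((continuousOn_const.mul (hρθcont.pow 3))) (fun t ht => by
          have := hne t ht; positivity)
    · exact (hPθcont.pow 2).div (continuousOn_const.mul (hρθcont.pow 4)) (fun t ht => by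
        have := hne t ht; positivity)
    · exact ((hρθcont.pow 2).inv₀ (fun t ht => pow_ne_zero 2 (hne t ht)))
  · -- second derivative
    intro t ht
    constructor
    · have hEq1 : EqOn (derivWithin (kepV₁ ρ θ) (Icc 0 (2*π)))
          (kepG ρ θ P Real.cos (fun x => -Real.sin x)) (Icc 0 (2*π)) := fun s hs => hdwV₁ s hs
      rw [derivWithin_congr hEq1 (hEq1 ht)]
      have := kep_second hρd hPd hρpos hmaps (fun x => Real.hasDerivAt_cos x)
        (fun x => by simpa using (Real.hasDerivAt_sin x).fun_neg) ht (hθdI t ht)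
      rw [this.derivWithin (hU2 t ht)]
      rw [kepV₁]
    · have hEq2 : EqOn (derivWithin (kepV₂ ρ θ) (Icc 0 (2*π)))
          (kepG ρ θ P Real.sin Real.cos) (Icc 0 (2*π)) := fun s hs => hdwV₂ s hs
      rw [derivWithin_congr hEq2 (hEq2 ht)]
      have := kep_second hρd hPd hρpos hmaps (fun x => Real.hasDerivAt_sin x)
        (fun x => by simpa using Real.hasDerivAt_cos x) ht (hθdI t ht)
      rw [this.derivWithin (hU2 t ht)]
      rw [kepV₂]
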